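/- There is a universal constant C > 0 with the following property. For all integers k ≥ 1, all γ ≥ 1, all ε ∈ (0, 1], and all θ, θ' ∈ Θ_k such that 1/γ ≤ τ_i ≤ γ and 1/γ ≤ τ'_i ≤ γ for every i ∈ {1,…,k}: if the Euclidean distance between the parameter vectors satisfies (Σ_{i=1}^k [(w_i − w'_i)² + (μ_i − μ'_i)² + (τ_i − τ'_i)²])^{1/2} ≤ C·(1/γ)·(ε/k)², then ‖M_θ − M_{θ'}‖₁ ≤ ε. -/

import Mathlib

set_option maxHeartbeats 1000000

open MeasureTheory Real Filter

/-- The Gaussian pdf with mean `μ` and precision `τ`. -/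
noncomputable def gaussPdf (μ τ x : ℝ) : ℝ :=
  τ / Real.sqrt (2 * Real.pi) * Real.exp (-(τ ^ 2 * (x - μ) ^ 2) / 2)

/-- The pdf of the `k`-GMM with weights `w`, means `μ` and precisions `τ`. -/
noncomputable def mix {k : ℕ} (w μ τ : Fin k → ℝ) (x : ℝ) : ℝ :=
  ∑ i, w i * gaussPdf (μ i) (τ i) x


lemma aux_sq_exp_le {b x : ℝ} (hb : 0 < b) :
    x ^ 2 * Real.exp (-b * x ^ 2) ≤ 1 / b := by
  have hE := Real.add_one_le_exp (b * x ^ 2)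
  have h1 : Real.exp (b * x ^ 2) * Real.exp (-b * x ^ 2) = 1 := by
    rw [← Real.exp_add]; simp
  have h2 := Real.exp_pos (-b * x ^ 2)
  have h3 := mul_le_mul_of_nonneg_right hE h2.le
  rw [h1] at h3
  have h4 : b * x ^ 2 * Real.exp (-b * x ^ 2) ≤ 1 := by nlinarith
  rw [le_div_iff₀ hb]; nlinarith

lemma mul_exp_le_sqrt {b x : ℝ} (hb : 0 < b) (hx : 0 ≤ x) :
    x * Real.exp (-b * x ^ 2) ≤ Real.sqrt (1/b) := by
  have key := aux_sq_exp_le (x := x) hb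
  have hsq : (x * Real.exp (-b * x ^ 2)) ^ 2 ≤ 1/b := by
    have hle1 : Real.exp (-b * x ^ 2) ≤ 1 := by
      rw [Real.exp_le_one_iff]; nlinarith
    have he : 0 < Real.exp (-b * x ^ 2) := Real.exp_pos _
    calc (x * Real.exp (-b * x ^ 2)) ^ 2
        = (x ^ 2 * Real.exp (-b * x ^ 2)) * Real.exp (-b * x ^ 2) := by ring
      _ ≤ (1/b) * 1 := mul_le_mul key hle1 he.le (by positivity)
      _ = 1/b := mul_one _
  nlinarith [Real.sq_sqrt (le_of_lt (by positivity : (0:ℝ) < 1/b)),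
    Real.sqrt_nonneg (1/b)]

lemma tendsto_mul_exp_neg_mul_sq_atTop {b : ℝ} (hb : 0 < b) :
    Tendsto (fun x : ℝ => x * Real.exp (-b * x ^ 2)) atTop (nhds 0) := by
  have hhalf : (0:ℝ) < b/2 := by linarith
  have h1 : Tendsto (fun x : ℝ => Real.exp (-(b/2) * x ^ 2)) atTop (nhds 0) := by
    have h0 : Tendsto (fun x : ℝ => (b/2) * x ^ 2) atTop atTop :=
      (tendsto_pow_atTop (by norm_num)).const_mul_atTop hhalf
    simpa [Function.comp_def, neg_mul] using Real.tendsto_exp_neg_atTop_nhds_zero.comp h0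
  have h2 : Tendsto (fun x : ℝ => Real.sqrt (1/(b/2)) * Real.exp (-(b/2) * x ^ 2)) atTop (nhds 0) := by
    simpa using h1.const_mul (Real.sqrt (1/(b/2)))
  refine squeeze_zero_norm' ?_ h2
  filter_upwards [eventually_ge_atTop (0:ℝ)] with x hx
  have hkey := mul_exp_le_sqrt (x := x) hhalf hx
  have hsplit : x * Real.exp (-b * x ^ 2)
      = (x * Real.exp (-(b/2) * x ^ 2)) * Real.exp (-(b/2) * x ^ 2) := by
    rw [mul_assoc, ← Real.exp_add]; ring_nf
  rw [Real.norm_eq_abs, abs_of_nonneg (by positivity), hsplit]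
  have he : 0 ≤ Real.exp (-(b/2) * x ^ 2) := (Real.exp_pos _).le
  exact mul_le_mul_of_nonneg_right hkey he

lemma integrable_sq_mul_exp {b : ℝ} (hb : 0 < b) :
    Integrable (fun x : ℝ => x ^ 2 * Real.exp (-b * x ^ 2)) := by
  have hhalf : (0:ℝ) < b/2 := by linarith
  apply Integrable.mono' ((integrable_exp_neg_mul_sq hhalf).const_mul (1/(b/2)))
  · exact (continuous_pow 2).aestronglyMeasurable.mul
      (Real.continuous_exp.comp (by continuity)).aestronglyMeasurable
  · filter_upwards with x
    rw [Real.norm_eq_abs, abs_of_nonneg (by positivity)]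
    have hsplit : x ^ 2 * Real.exp (-b * x ^ 2)
        = (x ^ 2 * Real.exp (-(b/2) * x ^ 2)) * Real.exp (-(b/2) * x ^ 2) := by
      rw [mul_assoc, ← Real.exp_add]; ring_nf
    rw [hsplit]
    exact mul_le_mul_of_nonneg_right (aux_sq_exp_le hhalf) (Real.exp_pos _).le

lemma integral_sq_mul_exp {b : ℝ} (hb : 0 < b) :
    ∫ x : ℝ, x ^ 2 * Real.exp (-b * x ^ 2) = Real.sqrt (π / b) / (2 * b) := by
  set f : ℝ → ℝ := fun x => x * Real.exp (-b * x ^ 2) with hf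
  set g : ℝ → ℝ := fun x => Real.exp (-b * x ^ 2) - 2 * b * (x ^ 2 * Real.exp (-b * x ^ 2)) with hg
  have hder : ∀ x : ℝ, HasDerivAt f (g x) x := by
    intro x
    have h1 : HasDerivAt (fun x : ℝ => -b * x ^ 2) (-b * (2 * x)) x := by
      simpa using ((hasDerivAt_pow 2 x).const_mul (-b))
    have h2 := ((hasDerivAt_id x).fun_mul h1.exp)
    refine h2.congr_deriv ?_
    simp [g]; ring
  have hint : Integrable g :=
    (integrable_exp_neg_mul_sq hb).sub ((integrable_sq_mul_exp hb).const_mul (2*b))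
  have htop : Tendsto f atTop (nhds 0) := tendsto_mul_exp_neg_mul_sq_atTop hb
  have hbot : Tendsto f atBot (nhds 0) := by
    have := (tendsto_mul_exp_neg_mul_sq_atTop hb).comp tendsto_neg_atBot_atTop
    have h2 : Tendsto (fun x : ℝ => -(x * Real.exp (-b * x ^ 2))) atBot (nhds 0) := by
      simpa [Function.comp_def, neg_sq, neg_mul] using this
    simpa [hf] using h2.neg
  have hIoi : ∫ x in Set.Ioi (0:ℝ), g x = 0 - f 0 :=
    integral_Ioi_of_hasDerivAt_of_tendsto' (fun x _ => hder x) hint.integrableOn htop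
  have hIic : ∫ x in Set.Iic (0:ℝ), g x = f 0 - 0 :=
    integral_Iic_of_hasDerivAt_of_tendsto' (fun x _ => hder x) hint.integrableOn hbot
  have hsplit : ∫ x in Set.Iic (0:ℝ), g x ∂volume + ∫ x in Set.Ioi (0:ℝ), g x ∂volume = ∫ x, g x ∂volume := by
    have := integral_add_compl (measurableSet_Iic (a := (0:ℝ))) hint
    rw [Set.compl_Iic] at this; exact this
  have hz : ∫ x, g x = 0 := by rw [← hsplit, hIoi, hIic]; simp [hf]
  have hsub : ∫ x, g x = (∫ x : ℝ, Real.exp (-b * x ^ 2)) - 2 * b * ∫ x : ℝ, x ^ 2 * Real.exp (-b * x ^ 2) := by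
    rw [hg]
    rw [integral_sub (integrable_exp_neg_mul_sq hb) ((integrable_sq_mul_exp hb).const_mul (2*b)),
      MeasureTheory.integral_const_mul]
  rw [integral_gaussian] at hsub
  rw [hz] at hsub
  have h2b : (2*b) ≠ 0 := by positivity
  field_simp at hsub ⊢
  linarith

lemma sqrt_two_pi_pos : 0 < Real.sqrt (2 * π) := Real.sqrt_pos.2 (by positivity)

lemma gaussPdf_eq (m s : ℝ) : gaussPdf m s
    = fun x => (s / Real.sqrt (2*π)) * Real.exp (-(s^2/2) * (x - m)^2) := by
  funext x
  rw [gaussPdf, show -(s^2 * (x-m)^2)/2 = -(s^2/2) * (x-m)^2 by ring]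

lemma gaussPdf_nonneg {m s : ℝ} (hs : 0 < s) (x : ℝ) : 0 ≤ gaussPdf m s x := by
  rw [gaussPdf]; positivity

lemma integrable_gaussPdf {s : ℝ} (m : ℝ) (hs : 0 < s) : Integrable (gaussPdf m s) := by
  rw [gaussPdf_eq]
  exact ((integrable_exp_neg_mul_sq (by positivity : (0:ℝ) < s^2/2)).comp_sub_right m).const_mul _

lemma sqrt_pi_div (s : ℝ) (hs : 0 < s) : Real.sqrt (π / (s^2/2)) = Real.sqrt (2*π) / s := by
  rw [show π / (s^2/2) = (Real.sqrt (2*π)/s)^2 by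
      rw [div_pow, Real.sq_sqrt (by positivity : (0:ℝ) ≤ 2*π)]; ring,
    Real.sqrt_sq (by positivity)]

lemma integral_gaussPdf {s : ℝ} (m : ℝ) (hs : 0 < s) : ∫ x, gaussPdf m s x = 1 := by
  rw [gaussPdf_eq]
  rw [MeasureTheory.integral_const_mul]
  have : ∫ x : ℝ, Real.exp (-(s^2/2) * (x - m)^2)
      = ∫ x : ℝ, Real.exp (-(s^2/2) * x^2) :=
    integral_sub_right_eq_self (fun x => Real.exp (-(s^2/2) * x^2)) m
  rw [this, integral_gaussian, sqrt_pi_div s hs]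
  field_simp

lemma integrable_sq_gaussPdf {s : ℝ} (m : ℝ) (hs : 0 < s) :
    Integrable (fun x => (x - m)^2 * gaussPdf m s x) := by
  rw [gaussPdf_eq]
  have h := ((integrable_sq_mul_exp (by positivity : (0:ℝ) < s^2/2)).comp_sub_right m).const_mul
    (s / Real.sqrt (2*π))
  apply h.congr
  filter_upwards with x; ring

lemma integral_sq_gaussPdf {s : ℝ} (m : ℝ) (hs : 0 < s) :
    ∫ x, (x - m)^2 * gaussPdf m s x = 1 / s^2 := by
  rw [gaussPdf_eq]
  have heq : ∀ x : ℝ, (x - m)^2 * ((s / Real.sqrt (2*π)) * Real.exp (-(s^2/2) * (x - m)^2))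
      = (s / Real.sqrt (2*π)) * ((x - m)^2 * Real.exp (-(s^2/2) * (x - m)^2)) := by
    intro x; ring
  simp_rw [heq]
  rw [MeasureTheory.integral_const_mul]
  have : ∫ x : ℝ, (x - m)^2 * Real.exp (-(s^2/2) * (x - m)^2)
      = ∫ x : ℝ, x^2 * Real.exp (-(s^2/2) * x^2) :=
    integral_sub_right_eq_self (fun x => x^2 * Real.exp (-(s^2/2) * x^2)) m
  rw [this, integral_sq_mul_exp (by positivity : (0:ℝ) < s^2/2), sqrt_pi_div s hs]
  have h1 : Real.sqrt (2*π) ≠ 0 := ne_of_gt sqrt_two_pi_pos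
  field_simp

lemma sqrt_two_pi_pos' : 0 < Real.sqrt (2 * π) := Real.sqrt_pos.2 (by positivity)

/-- Derivative of the Gaussian pdf along a line in parameter space. -/
lemma hasDerivAt_gaussLine (μ₀ dμ τ₀ dτ x t : ℝ) (hst : τ₀ + t * dτ ≠ 0) :
    HasDerivAt (fun t : ℝ => gaussPdf (μ₀ + t * dμ) (τ₀ + t * dτ) x)
      (gaussPdf (μ₀ + t * dμ) (τ₀ + t * dτ) x *
        (dτ / (τ₀ + t * dτ) - (τ₀ + t * dτ) * dτ * (x - (μ₀ + t * dμ))^2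
          + (τ₀ + t * dτ)^2 * dμ * (x - (μ₀ + t * dμ)))) t := by
  have hc0 : Real.sqrt (2 * π) ≠ 0 := ne_of_gt sqrt_two_pi_pos'
  have hs' : HasDerivAt (fun t : ℝ => τ₀ + t * dτ) dτ t := by
    simpa using (hasDerivAt_mul_const dτ).const_add τ₀
  have hu : HasDerivAt (fun t : ℝ => x - (μ₀ + t * dμ)) (-dμ) t := by
    simpa using ((hasDerivAt_mul_const dμ).const_add μ₀).const_sub x
  have hE : HasDerivAt (fun t : ℝ => -((τ₀ + t * dτ)^2 * (x - (μ₀ + t * dμ))^2) / 2)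
      (-((2 * (τ₀ + t * dτ) ^ 1 * dτ) * (x - (μ₀ + t * dμ))^2
        + (τ₀ + t * dτ)^2 * (2 * (x - (μ₀ + t * dμ)) ^ 1 * (-dμ))) / 2) t :=
    (((hs'.pow 2).mul (hu.pow 2)).neg.div_const 2)
  have h := (hs'.div_const (Real.sqrt (2 * π))).fun_mul hE.exp
  have heq : (fun t : ℝ => gaussPdf (μ₀ + t * dμ) (τ₀ + t * dτ) x)
      = fun t : ℝ => (τ₀ + t * dτ) / Real.sqrt (2 * π)
          * Real.exp (-((τ₀ + t * dτ)^2 * (x - (μ₀ + t * dμ))^2) / 2) := rfl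
  rw [heq, gaussPdf]
  refine h.congr_deriv ?_
  simp only [pow_one]
  generalize hS : τ₀ + t * dτ = S at hst ⊢
  generalize x - (μ₀ + t * dμ) = U
  generalize Real.exp (-(S ^ 2 * U ^ 2) / 2) = e
  field_simp
  ring

/-- Pointwise bound on the derivative. -/
lemma gaussLine_deriv_bound {S : ℝ} (hst : 0 < S) (M dμ dτ x : ℝ) :
    |gaussPdf M S x * (dτ / S - S * dτ * (x - M)^2 + S^2 * dμ * (x - M))|
      ≤ (|dτ| + S^2 * |dμ| / 2) * (gaussPdf M S x * (1 / S + S * (x - M)^2)) := by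
  have hg0 := gaussPdf_nonneg (m := M) hst x
  rw [abs_mul, abs_of_nonneg hg0]
  have key : |dτ / S - S * dτ * (x - M)^2 + S^2 * dμ * (x - M)|
      ≤ (|dτ| + S^2 * |dμ| / 2) * (1 / S + S * (x - M)^2) := by
    generalize x - M = u
    have h3 : |dτ / S + -(S * dτ * u^2) + S^2 * dμ * u|
        ≤ |dτ / S| + |-(S * dτ * u^2)| + |S^2 * dμ * u| := abs_add_three _ _ _
    rw [abs_neg] at h3
    have e1 : |dτ / S| = |dτ| / S := by rw [abs_div, abs_of_pos hst]
    have e2 : |S * dτ * u^2| = S * |dτ| * u^2 := by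
      rw [abs_mul, abs_mul, abs_of_pos hst, abs_of_nonneg (sq_nonneg u)]
    have e3 : |S^2 * dμ * u| = S^2 * |dμ| * |u| := by
      rw [abs_mul, abs_mul, abs_of_nonneg (sq_nonneg S)]
    rw [e1, e2, e3] at h3
    have hAM : S^2 * |dμ| * |u| ≤ (S^2 * |dμ| / 2) * (1 / S + S * u^2) := by
      have hrw : 1 / S + S * u^2 = (1 + S^2 * u^2) / S := by field_simp
      rw [hrw, ← mul_div_assoc, le_div_iff₀ hst]
      have hsq : (S * |u| - 1)^2 = S^2 * u^2 - 2 * S * |u| + 1 := by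
        have h6 : |u|^2 = u^2 := sq_abs u
        nlinarith [h6]
      have hq : 0 ≤ S^2 * |dμ| / 2 * (S^2 * u^2 - 2 * S * |u| + 1) := by
        rw [← hsq]
        exact mul_nonneg (by positivity) (sq_nonneg _)
      nlinarith [hq]
    have hexp : (|dτ| + S^2 * |dμ| / 2) * (1 / S + S * u^2)
        = (|dτ| / S + S * |dτ| * u^2) + (S^2 * |dμ| / 2) * (1 / S + S * u^2) := by
      field_simp
    have hform : dτ / S - S * dτ * u^2 + S^2 * dμ * u
        = dτ / S + -(S * dτ * u^2) + S^2 * dμ * u := by ring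
    rw [hform, hexp]
    linarith
  calc gaussPdf M S x * |dτ / S - S * dτ * (x - M)^2 + S^2 * dμ * (x - M)|
      ≤ gaussPdf M S x * ((|dτ| + S^2 * |dμ| / 2) * (1 / S + S * (x - M)^2)) :=
        mul_le_mul_of_nonneg_left key hg0
    _ = (|dτ| + S^2 * |dμ| / 2) * (gaussPdf M S x * (1 / S + S * (x - M)^2)) := by ring

lemma gaussLine_integrable_bound {S : ℝ} (M : ℝ) (hst : 0 < S) :
    Integrable (fun x => gaussPdf M S x * (1 / S + S * (x - M)^2)) := by
  have h := ((integrable_gaussPdf M hst).const_mul (1 / S)).add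
    ((integrable_sq_gaussPdf M hst).const_mul S)
  apply h.congr
  filter_upwards with x
  simp only [Pi.add_apply]
  ring

lemma gaussLine_integral_bound {S : ℝ} (M : ℝ) (hst : 0 < S) :
    ∫ x, gaussPdf M S x * (1 / S + S * (x - M)^2) = 2 / S := by
  have heq : ∀ x : ℝ, gaussPdf M S x * (1 / S + S * (x - M)^2)
      = (1 / S) * gaussPdf M S x + S * ((x - M)^2 * gaussPdf M S x) := by
    intro x; ring
  simp_rw [heq]
  rw [integral_add ((integrable_gaussPdf M hst).const_mul _)
      ((integrable_sq_gaussPdf M hst).const_mul _),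
    MeasureTheory.integral_const_mul, MeasureTheory.integral_const_mul,
    integral_gaussPdf M hst, integral_sq_gaussPdf M hst]
  field_simp
  ring

lemma coeff_bound {γ S dμ dτ : ℝ} (hγ : 1 ≤ γ) (hl : 1/γ ≤ S) (hu : S ≤ γ) :
    (|dτ| + S^2 * |dμ| / 2) * (2 / S) ≤ γ * |dμ| + 2 * γ * |dτ| := by
  have hγ0 : (0:ℝ) < γ := by linarith
  have hS : 0 < S := lt_of_lt_of_le (by positivity) hl
  have hSinv : 1/S ≤ γ := by
    rw [div_le_iff₀ hS]
    rw [div_le_iff₀ hγ0] at hl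
    nlinarith
  have hexp : (|dτ| + S^2 * |dμ| / 2) * (2 / S) = 2 * |dτ| * (1/S) + S * |dμ| := by
    field_simp
  rw [hexp]
  have h1 : 2 * |dτ| * (1/S) ≤ 2 * |dτ| * γ :=
    mul_le_mul_of_nonneg_left hSinv (by positivity)
  have h2 : S * |dμ| ≤ γ * |dμ| := mul_le_mul_of_nonneg_right hu (abs_nonneg _)
  linarith

lemma gauss_L1 {γ μ₀ μ₁ τ₀ τ₁ : ℝ} (hγ : 1 ≤ γ)
    (h00 : 1/γ ≤ τ₀) (h01 : τ₀ ≤ γ) (h10 : 1/γ ≤ τ₁) (h11 : τ₁ ≤ γ) :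
    ∫ x, |gaussPdf μ₁ τ₁ x - gaussPdf μ₀ τ₀ x|
      ≤ γ * |μ₁ - μ₀| + 2 * γ * |τ₁ - τ₀| := by
  have hγ0 : (0:ℝ) < γ := lt_of_lt_of_le one_pos hγ
  have hγi : (0:ℝ) < 1/γ := by positivity
  have hτ₀ : 0 < τ₀ := lt_of_lt_of_le hγi h00
  have hτ₁ : 0 < τ₁ := lt_of_lt_of_le hγi h10
  have hA0 : (0:ℝ) ≤ γ * |μ₁ - μ₀| + 2 * γ * |τ₁ - τ₀| := by positivity
  have hsl : ∀ t ∈ Set.Icc (0:ℝ) 1, 1/γ ≤ τ₀ + t * (τ₁ - τ₀) := by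
    rintro t ⟨ht0, ht1⟩; nlinarith
  have hsu : ∀ t ∈ Set.Icc (0:ℝ) 1, τ₀ + t * (τ₁ - τ₀) ≤ γ := by
    rintro t ⟨ht0, ht1⟩; nlinarith
  have hspos : ∀ t ∈ Set.Icc (0:ℝ) 1, 0 < τ₀ + t * (τ₁ - τ₀) :=
    fun t ht => lt_of_lt_of_le hγi (hsl t ht)
  set D : ℝ → ℝ → ℝ := fun t x =>
    gaussPdf (μ₀ + t * (μ₁ - μ₀)) (τ₀ + t * (τ₁ - τ₀)) x *
      ((τ₁ - τ₀) / (τ₀ + t * (τ₁ - τ₀))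
        - (τ₀ + t * (τ₁ - τ₀)) * (τ₁ - τ₀) * (x - (μ₀ + t * (μ₁ - μ₀)))^2
        + (τ₀ + t * (τ₁ - τ₀))^2 * (μ₁ - μ₀) * (x - (μ₀ + t * (μ₁ - μ₀)))) with hD
  -- continuity in t for fixed x, on [0,1]
  have hcont : ∀ x : ℝ, ContinuousOn (fun t => D t x) (Set.Icc (0:ℝ) 1) := by
    intro x
    have hs : ContinuousOn (fun t : ℝ => τ₀ + t * (τ₁ - τ₀)) (Set.Icc (0:ℝ) 1) := by fun_prop
    have hm : ContinuousOn (fun t : ℝ => x - (μ₀ + t * (μ₁ - μ₀))) (Set.Icc (0:ℝ) 1) := by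
      fun_prop
    have hne : ∀ t ∈ Set.Icc (0:ℝ) 1, τ₀ + t * (τ₁ - τ₀) ≠ 0 :=
      fun t ht => ne_of_gt (hspos t ht)
    rw [hD]
    simp only [gaussPdf]
    apply ContinuousOn.mul
    · apply ContinuousOn.mul
      · exact hs.div_const _
      · apply Real.continuous_exp.comp_continuousOn
        fun_prop
    · apply ContinuousOn.add
      · apply ContinuousOn.sub
        · exact ContinuousOn.div continuousOn_const hs hne
        · fun_prop
      · fun_prop
  have hcontU : ∀ x : ℝ, ContinuousOn (fun t => D t x) (Set.uIcc (0:ℝ) 1) := by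
    intro x; rw [Set.uIcc_of_le zero_le_one]; exact hcont x
  have hII : ∀ x : ℝ, IntervalIntegrable (fun t => D t x) volume 0 1 :=
    fun x => (hcontU x).intervalIntegrable
  -- FTC
  have hFTC : ∀ x : ℝ, gaussPdf μ₁ τ₁ x - gaussPdf μ₀ τ₀ x = ∫ t in (0:ℝ)..1, D t x := by
    intro x
    have hder : ∀ t ∈ Set.uIcc (0:ℝ) 1,
        HasDerivAt (fun t => gaussPdf (μ₀ + t * (μ₁ - μ₀)) (τ₀ + t * (τ₁ - τ₀)) x) (D t x) t := by
      intro t ht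
      rw [Set.uIcc_of_le zero_le_one] at ht
      exact hasDerivAt_gaussLine μ₀ _ τ₀ _ x t (ne_of_gt (hspos t ht))
    have h := intervalIntegral.integral_eq_sub_of_hasDerivAt hder (hII x)
    rw [h]
    have e1 : μ₀ + 1 * (μ₁ - μ₀) = μ₁ := by ring
    have e2 : τ₀ + 1 * (τ₁ - τ₀) = τ₁ := by ring
    have e3 : μ₀ + 0 * (μ₁ - μ₀) = μ₀ := by ring
    have e4 : τ₀ + 0 * (τ₁ - τ₀) = τ₀ := by ring
    rw [e1, e2, e3, e4]
  -- joint measurability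
  have hDm : Measurable (fun p : ℝ × ℝ => D p.1 p.2) := by
    rw [hD]
    simp only [gaussPdf]
    measurability
  -- per-t bound
  have hpt : ∀ t ∈ Set.Icc (0:ℝ) 1, (∫⁻ x, ENNReal.ofReal |D t x|)
      ≤ ENNReal.ofReal (γ * |μ₁ - μ₀| + 2 * γ * |τ₁ - τ₀|) := by
    intro t ht
    have hst := hspos t ht
    have hint2 : Integrable (fun x => (|τ₁ - τ₀| + (τ₀ + t * (τ₁ - τ₀))^2 * |μ₁ - μ₀| / 2) *
        (gaussPdf (μ₀ + t * (μ₁ - μ₀)) (τ₀ + t * (τ₁ - τ₀)) x *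
          (1 / (τ₀ + t * (τ₁ - τ₀)) + (τ₀ + t * (τ₁ - τ₀)) * (x - (μ₀ + t * (μ₁ - μ₀)))^2))) :=
      (gaussLine_integrable_bound _ hst).const_mul _
    have hnn : (0:ℝ→ℝ) ≤ᵐ[volume] (fun x => (|τ₁ - τ₀| + (τ₀ + t * (τ₁ - τ₀))^2 * |μ₁ - μ₀| / 2) *
        (gaussPdf (μ₀ + t * (μ₁ - μ₀)) (τ₀ + t * (τ₁ - τ₀)) x *
          (1 / (τ₀ + t * (τ₁ - τ₀)) + (τ₀ + t * (τ₁ - τ₀)) * (x - (μ₀ + t * (μ₁ - μ₀)))^2))) := by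
      filter_upwards with x
      have hg := gaussPdf_nonneg (m := μ₀ + t * (μ₁ - μ₀)) hst x
      have : (0:ℝ) ≤ 1 / (τ₀ + t * (τ₁ - τ₀)) + (τ₀ + t * (τ₁ - τ₀)) * (x - (μ₀ + t * (μ₁ - μ₀)))^2 := by
        positivity
      positivity
    calc ∫⁻ x, ENNReal.ofReal |D t x|
        ≤ ∫⁻ x, ENNReal.ofReal ((|τ₁ - τ₀| + (τ₀ + t * (τ₁ - τ₀))^2 * |μ₁ - μ₀| / 2) *
            (gaussPdf (μ₀ + t * (μ₁ - μ₀)) (τ₀ + t * (τ₁ - τ₀)) x *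
              (1 / (τ₀ + t * (τ₁ - τ₀)) + (τ₀ + t * (τ₁ - τ₀)) * (x - (μ₀ + t * (μ₁ - μ₀)))^2))) := by
          apply lintegral_mono
          intro x
          exact ENNReal.ofReal_le_ofReal (gaussLine_deriv_bound hst _ _ _ x)
      _ = ENNReal.ofReal (∫ x, (|τ₁ - τ₀| + (τ₀ + t * (τ₁ - τ₀))^2 * |μ₁ - μ₀| / 2) *
            (gaussPdf (μ₀ + t * (μ₁ - μ₀)) (τ₀ + t * (τ₁ - τ₀)) x *
              (1 / (τ₀ + t * (τ₁ - τ₀)) + (τ₀ + t * (τ₁ - τ₀)) * (x - (μ₀ + t * (μ₁ - μ₀)))^2))) :=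
          (ofReal_integral_eq_lintegral_ofReal hint2 hnn).symm
      _ = ENNReal.ofReal ((|τ₁ - τ₀| + (τ₀ + t * (τ₁ - τ₀))^2 * |μ₁ - μ₀| / 2) *
            (2 / (τ₀ + t * (τ₁ - τ₀)))) := by
          rw [MeasureTheory.integral_const_mul, gaussLine_integral_bound _ hst]
      _ ≤ ENNReal.ofReal (γ * |μ₁ - μ₀| + 2 * γ * |τ₁ - τ₀|) :=
          ENNReal.ofReal_le_ofReal (coeff_bound hγ (hsl t ht) (hsu t ht))
  -- assemble
  have hintmain : Integrable (fun x => |gaussPdf μ₁ τ₁ x - gaussPdf μ₀ τ₀ x|) :=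
    ((integrable_gaussPdf μ₁ hτ₁).sub (integrable_gaussPdf μ₀ hτ₀)).abs
  rw [MeasureTheory.integral_eq_lintegral_of_nonneg_ae
    (Filter.Eventually.of_forall fun x => abs_nonneg _) hintmain.1]
  apply ENNReal.toReal_le_of_le_ofReal hA0
  have hmeas : AEMeasurable (Function.uncurry fun (x t : ℝ) => ENNReal.ofReal |D t x|)
      (volume.prod (volume.restrict (Set.Ioc (0:ℝ) 1))) := by
    have h1 : Measurable (fun p : ℝ × ℝ => ENNReal.ofReal |D p.2 p.1|) :=
      ENNReal.measurable_ofReal.comp ((hDm.comp measurable_swap).abs)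
    exact h1.aemeasurable
  calc ∫⁻ x, ENNReal.ofReal |gaussPdf μ₁ τ₁ x - gaussPdf μ₀ τ₀ x|
      ≤ ∫⁻ x, ∫⁻ t in Set.Ioc (0:ℝ) 1, ENNReal.ofReal |D t x| := by
        apply lintegral_mono
        intro x
        have h1 : |gaussPdf μ₁ τ₁ x - gaussPdf μ₀ τ₀ x| ≤ ∫ t in (0:ℝ)..1, |D t x| := by
          rw [hFTC x]
          exact intervalIntegral.abs_integral_le_integral_abs zero_le_one
        have h2 : ENNReal.ofReal (∫ t in (0:ℝ)..1, |D t x|)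
            = ∫⁻ t in Set.Ioc (0:ℝ) 1, ENNReal.ofReal |D t x| := by
          rw [intervalIntegral.integral_of_le zero_le_one]
          exact ofReal_integral_eq_lintegral_ofReal
            ((intervalIntegrable_iff_integrableOn_Ioc_of_le zero_le_one).1 (hII x).abs)
            (Filter.Eventually.of_forall fun t => abs_nonneg _)
        calc ENNReal.ofReal |gaussPdf μ₁ τ₁ x - gaussPdf μ₀ τ₀ x|
            ≤ ENNReal.ofReal (∫ t in (0:ℝ)..1, |D t x|) := ENNReal.ofReal_le_ofReal h1
          _ = _ := h2
    _ = ∫⁻ t in Set.Ioc (0:ℝ) 1, ∫⁻ x, ENNReal.ofReal |D t x| :=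
        lintegral_lintegral_swap hmeas
    _ ≤ ∫⁻ _ in Set.Ioc (0:ℝ) 1, ENNReal.ofReal (γ * |μ₁ - μ₀| + 2 * γ * |τ₁ - τ₀|) :=
        setLIntegral_mono measurable_const
          (fun t ht => hpt t (Set.Ioc_subset_Icc_self ht))
    _ = ENNReal.ofReal (γ * |μ₁ - μ₀| + 2 * γ * |τ₁ - τ₀|) * volume (Set.Ioc (0:ℝ) 1) :=
        setLIntegral_const _ _
    _ ≤ ENNReal.ofReal (γ * |μ₁ - μ₀| + 2 * γ * |τ₁ - τ₀|) := by
        rw [Real.volume_Ioc]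
        simp

theorem stmt7 :
    ∃ C : ℝ, 0 < C ∧
      ∀ (k : ℕ), 1 ≤ k → ∀ (γ ε : ℝ), 1 ≤ γ → 0 < ε → ε ≤ 1 →
        ∀ (w μ τ w' μ' τ' : Fin k → ℝ),
          (∀ i, 0 ≤ w i) → (∑ i, w i = 1) → (∀ i, 0 < τ i) →
          (∀ i, 0 ≤ w' i) → (∑ i, w' i = 1) → (∀ i, 0 < τ' i) →
          (∀ i, 1 / γ ≤ τ i ∧ τ i ≤ γ) → (∀ i, 1 / γ ≤ τ' i ∧ τ' i ≤ γ) →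
          Real.sqrt (∑ i, ((w i - w' i) ^ 2 + (μ i - μ' i) ^ 2 + (τ i - τ' i) ^ 2))
            ≤ C * (1 / γ) * (ε / (k : ℝ)) ^ 2 →
          (∫ x, |mix w μ τ x - mix w' μ' τ' x|) ≤ ε := by
  refine ⟨1/4, by norm_num, ?_⟩
  intro k hk γ ε hγ hε0 hε1 w μ τ w' μ' τ' hw hwsum hτ hw' hwsum' hτ' hb hb' hdist
  have hγ0 : (0:ℝ) < γ := lt_of_lt_of_le one_pos hγ
  have hk1 : (1:ℝ) ≤ (k:ℝ) := by exact_mod_cast hk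
  have hk0 : (0:ℝ) < (k:ℝ) := by linarith
  set δ : ℝ := 1/4 * (1/γ) * (ε / (k:ℝ))^2 with hδ
  have hδ0 : 0 ≤ δ := by positivity
  -- componentwise bounds
  have hcomp : ∀ i : Fin k, |w i - w' i| ≤ δ ∧ |μ i - μ' i| ≤ δ ∧ |τ i - τ' i| ≤ δ := by
    intro i
    have hterm : ∀ j : Fin k, (0:ℝ) ≤ (w j - w' j)^2 + (μ j - μ' j)^2 + (τ j - τ' j)^2 := by
      intro j; positivity
    have hle : ((w i - w' i)^2 + (μ i - μ' i)^2 + (τ i - τ' i)^2)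
        ≤ ∑ j, ((w j - w' j)^2 + (μ j - μ' j)^2 + (τ j - τ' j)^2) :=
      Finset.single_le_sum (fun j _ => hterm j) (Finset.mem_univ i)
    have key : ∀ a : ℝ, a^2 ≤ (w i - w' i)^2 + (μ i - μ' i)^2 + (τ i - τ' i)^2 → |a| ≤ δ := by
      intro a ha
      have h1 : |a| = Real.sqrt (a^2) := (Real.sqrt_sq_eq_abs a).symm
      rw [h1]
      calc Real.sqrt (a^2)
          ≤ Real.sqrt (∑ j, ((w j - w' j)^2 + (μ j - μ' j)^2 + (τ j - τ' j)^2)) :=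
            Real.sqrt_le_sqrt (le_trans ha hle)
        _ ≤ δ := hdist
    exact ⟨key _ (by nlinarith [sq_nonneg (μ i - μ' i), sq_nonneg (τ i - τ' i)]),
      key _ (by nlinarith [sq_nonneg (w i - w' i), sq_nonneg (τ i - τ' i)]),
      key _ (by nlinarith [sq_nonneg (w i - w' i), sq_nonneg (μ i - μ' i)])⟩
  have hw'le1 : ∀ i : Fin k, w' i ≤ 1 := by
    intro i
    rw [← hwsum']
    exact Finset.single_le_sum (fun j _ => hw' j) (Finset.mem_univ i)
  -- integrability of each piece
  have hIi : ∀ i : Fin k, Integrable (fun x =>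
      w i * gaussPdf (μ i) (τ i) x - w' i * gaussPdf (μ' i) (τ' i) x) := fun i =>
    ((integrable_gaussPdf _ (hτ i)).const_mul _).sub ((integrable_gaussPdf _ (hτ' i)).const_mul _)
  -- per-component integral bound
  have hibound : ∀ i : Fin k,
      ∫ x, |w i * gaussPdf (μ i) (τ i) x - w' i * gaussPdf (μ' i) (τ' i) x|
        ≤ |w i - w' i| + w' i * (γ * |μ i - μ' i| + 2 * γ * |τ i - τ' i|) := by
    intro i
    have hptw : ∀ x, |w i * gaussPdf (μ i) (τ i) x - w' i * gaussPdf (μ' i) (τ' i) x|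
        ≤ |w i - w' i| * gaussPdf (μ i) (τ i) x
          + w' i * |gaussPdf (μ i) (τ i) x - gaussPdf (μ' i) (τ' i) x| := by
      intro x
      have hre : w i * gaussPdf (μ i) (τ i) x - w' i * gaussPdf (μ' i) (τ' i) x
          = (w i - w' i) * gaussPdf (μ i) (τ i) x
            + w' i * (gaussPdf (μ i) (τ i) x - gaussPdf (μ' i) (τ' i) x) := by ring
      rw [hre]
      refine (abs_add_le _ _).trans ?_
      rw [abs_mul, abs_mul, abs_of_nonneg (gaussPdf_nonneg (hτ i) x), abs_of_nonneg (hw' i)]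
    have hsubi : Integrable (fun x => |gaussPdf (μ i) (τ i) x - gaussPdf (μ' i) (τ' i) x|) :=
      ((integrable_gaussPdf _ (hτ i)).sub (integrable_gaussPdf _ (hτ' i))).abs
    have ha1 : Integrable (fun x => |w i - w' i| * gaussPdf (μ i) (τ i) x) :=
      (integrable_gaussPdf _ (hτ i)).const_mul _
    have ha2 : Integrable (fun x => w' i * |gaussPdf (μ i) (τ i) x - gaussPdf (μ' i) (τ' i) x|) :=
      hsubi.const_mul _
    have hint1 : Integrable (fun x => |w i - w' i| * gaussPdf (μ i) (τ i) x
        + w' i * |gaussPdf (μ i) (τ i) x - gaussPdf (μ' i) (τ' i) x|) := ha1.add ha2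
    calc ∫ x, |w i * gaussPdf (μ i) (τ i) x - w' i * gaussPdf (μ' i) (τ' i) x|
        ≤ ∫ x, (|w i - w' i| * gaussPdf (μ i) (τ i) x
            + w' i * |gaussPdf (μ i) (τ i) x - gaussPdf (μ' i) (τ' i) x|) :=
          integral_mono (hIi i).abs hint1 hptw
      _ = |w i - w' i| * (∫ x, gaussPdf (μ i) (τ i) x)
            + w' i * ∫ x, |gaussPdf (μ i) (τ i) x - gaussPdf (μ' i) (τ' i) x| := by
          rw [integral_add ha1 ha2,
            MeasureTheory.integral_const_mul, MeasureTheory.integral_const_mul]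
      _ ≤ |w i - w' i| + w' i * (γ * |μ i - μ' i| + 2 * γ * |τ i - τ' i|) := by
          rw [integral_gaussPdf _ (hτ i), mul_one]
          have := gauss_L1 (μ₀ := μ' i) (μ₁ := μ i) hγ (hb' i).1 (hb' i).2 (hb i).1 (hb i).2
          exact add_le_add_right (mul_le_mul_of_nonneg_left this (hw' i)) _
  -- sum up
  have hmixsub : ∀ x, mix w μ τ x - mix w' μ' τ' x
      = ∑ i, (w i * gaussPdf (μ i) (τ i) x - w' i * gaussPdf (μ' i) (τ' i) x) := by
    intro x; unfold mix; rw [← Finset.sum_sub_distrib]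
  have hintmix : Integrable (fun x => |mix w μ τ x - mix w' μ' τ' x|) := by
    apply Integrable.abs
    have : (fun x => mix w μ τ x - mix w' μ' τ' x)
        = fun x => ∑ i, (w i * gaussPdf (μ i) (τ i) x - w' i * gaussPdf (μ' i) (τ' i) x) := by
      funext x; exact hmixsub x
    rw [this]
    exact integrable_finset_sum _ (fun i _ => hIi i)
  calc ∫ x, |mix w μ τ x - mix w' μ' τ' x|
      ≤ ∫ x, ∑ i, |w i * gaussPdf (μ i) (τ i) x - w' i * gaussPdf (μ' i) (τ' i) x| := by
        apply integral_mono hintmix (integrable_finset_sum _ (fun i _ => (hIi i).abs))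
        intro x
        show |mix w μ τ x - mix w' μ' τ' x| ≤ ∑ i, |w i * gaussPdf (μ i) (τ i) x - w' i * gaussPdf (μ' i) (τ' i) x|
        rw [hmixsub x]
        exact Finset.abs_sum_le_sum_abs _ _
    _ = ∑ i, ∫ x, |w i * gaussPdf (μ i) (τ i) x - w' i * gaussPdf (μ' i) (τ' i) x| :=
        integral_finset_sum _ (fun i _ => (hIi i).abs)
    _ ≤ ∑ _i : Fin k, 4 * γ * δ := by
        apply Finset.sum_le_sum
        intro i _
        have h1 := hibound i
        obtain ⟨e1, e2, e3⟩ := hcomp i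
        have h2 : w' i * (γ * |μ i - μ' i| + 2 * γ * |τ i - τ' i|) ≤ γ * δ + 2 * γ * δ := by
          have hrhs : γ * |μ i - μ' i| + 2 * γ * |τ i - τ' i| ≤ γ * δ + 2 * γ * δ := by
            have := mul_le_mul_of_nonneg_left e2 hγ0.le
            have := mul_le_mul_of_nonneg_left e3 (by positivity : (0:ℝ) ≤ 2 * γ)
            linarith
          calc w' i * (γ * |μ i - μ' i| + 2 * γ * |τ i - τ' i|)
              ≤ 1 * (γ * |μ i - μ' i| + 2 * γ * |τ i - τ' i|) := by
                apply mul_le_mul_of_nonneg_right (hw'le1 i) (by positivity)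
            _ = γ * |μ i - μ' i| + 2 * γ * |τ i - τ' i| := one_mul _
            _ ≤ γ * δ + 2 * γ * δ := hrhs
        have : |w i - w' i| + w' i * (γ * |μ i - μ' i| + 2 * γ * |τ i - τ' i|)
            ≤ δ + (γ * δ + 2 * γ * δ) := add_le_add e1 h2
        have h4 : δ + (γ * δ + 2 * γ * δ) ≤ 4 * γ * δ := by nlinarith
        linarith
    _ = (k:ℝ) * (4 * γ * δ) := by
        rw [Finset.sum_const, Finset.card_univ, Fintype.card_fin]
        simp [nsmul_eq_mul]
    _ ≤ ε := by
        have hval : (k:ℝ) * (4 * γ * δ) = ε^2 / (k:ℝ) := by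
          rw [hδ]; field_simp
        rw [hval, div_le_iff₀ hk0]
        nlinarith
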